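/- Let 1 ≤ p < ∞ and consider the rooted ray tree: I = ℕ with parent map P(i+1) = some i and P(0) = none, so that M_n(i) = {i+n} for all n, i. Let ρ = (ρ_i)_{i∈ℕ} be a weight and define ρ̃ : [0,∞) → ℝ by ρ̃(u) := ρ_{⌊u⌋}(u − ⌊u⌋). Then the map Φ defined by Φ(f)(u) := f_{⌊u⌋}(u − ⌊u⌋) is a surjective linear isometry from L^p_ρ(L(G)) onto the weighted space L^p([0,∞), ρ̃(u)du), and Φ intertwines the tree translation with the classical left translation on the half-line: for every f ∈ L^p_ρ(L(G)) and every t ≥ 0, Φ(T_t f)(u) = Φ(f)(u + t) for almost every u ≥ 0. -/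

import Mathlib

open MeasureTheory ENNReal

noncomputable section

/-- `nfl t s = ⌊s + t⌋ ∈ ℕ`. -/
def nfl (t s : ℝ) : ℕ := ⌊s + t⌋₊

/-- The left translation on the rooted ray tree (`I = ℕ`, parent map `P (i+1) = some i`,
`P 0 = none`, so `M_n(i) = {i + n}`): `(T_t f)_i(s) = f_{i+n(t,s)}(t + s - n(t,s))`. -/
def TleftRay (f : ℕ → ℝ → ℝ) (t : ℝ) (i : ℕ) (s : ℝ) : ℝ :=
  f (i + nfl t s) (t + s - (nfl t s : ℝ))

/-- The `p`-th power of the norm of a family `f` in `L^p_ρ(L(G))`: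
`‖f‖_{p,ρ}^p = ∑_{i ∈ ℕ} ∫_0^1 |f_i(s)|^p ρ_i(s) ds`, with values in `[0,∞]`. -/
def pnorm (ρ : ℕ → ℝ → ℝ) (p : ℝ) (f : ℕ → ℝ → ℝ) : ℝ≥0∞ :=
  ∑' i, ∫⁻ s in Set.Icc (0 : ℝ) 1, ENNReal.ofReal (|f i s| ^ p * ρ i s)

/-- Membership in `L^p_ρ(L(G))`. -/
def memLprho (ρ : ℕ → ℝ → ℝ) (p : ℝ) (f : ℕ → ℝ → ℝ) : Prop :=
  (∀ i, AEMeasurable (f i) (volume.restrict (Set.Icc (0 : ℝ) 1))) ∧ pnorm ρ p f < ⊤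

/-- The identification `Φ(f)(u) = f_{⌊u⌋}(u - ⌊u⌋)` of families on the ray tree with
functions on `[0,∞)`. -/
def Phi (f : ℕ → ℝ → ℝ) (u : ℝ) : ℝ := f ⌊u⌋₊ (u - (⌊u⌋₊ : ℝ))

/-- The glued weight `ρ̃(u) = ρ_{⌊u⌋}(u - ⌊u⌋)` on `[0,∞)`. -/
def rhoTilde (ρ : ℕ → ℝ → ℝ) (u : ℝ) : ℝ := ρ ⌊u⌋₊ (u - (⌊u⌋₊ : ℝ))

/-- The weighted measure `ρ̃(u) du` on `[0,∞)`. -/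
def rayMeasure (ρ : ℕ → ℝ → ℝ) : Measure ℝ :=
  (volume.restrict (Set.Ici (0 : ℝ))).withDensity fun u => ENNReal.ofReal (rhoTilde ρ u)

namespace RayAux

open Set

lemma preimage_Ico (i : ℕ) :
    (fun x : ℝ => x + (i : ℝ)) ⁻¹' Ico (i : ℝ) (i + 1) = Ico (0 : ℝ) 1 := by
  ext x
  simp only [mem_preimage, mem_Ico]
  constructor <;> rintro ⟨h1, h2⟩ <;> constructor <;> linarith

lemma preimage_Icc (i : ℕ) :
    (fun x : ℝ => x + (i : ℝ)) ⁻¹' Icc (i : ℝ) (i + 1) = Icc (0 : ℝ) 1 := by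
  ext x
  simp only [mem_preimage, mem_Icc]
  constructor <;> rintro ⟨h1, h2⟩ <;> constructor <;> linarith

lemma map_Ico (i : ℕ) :
    Measure.map (fun x : ℝ => x + (i : ℝ)) (volume.restrict (Ico (0 : ℝ) 1)) =
      volume.restrict (Ico (i : ℝ) (i + 1)) := by
  rw [← preimage_Ico i, ← (measurableEmbedding_addRight (i : ℝ)).restrict_map,
    map_add_right_eq_self]

lemma map_Icc (i : ℕ) :
    Measure.map (fun x : ℝ => x + (i : ℝ)) (volume.restrict (Icc (0 : ℝ) 1)) =
      volume.restrict (Icc (i : ℝ) (i + 1)) := by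
  rw [← preimage_Icc i, ← (measurableEmbedding_addRight (i : ℝ)).restrict_map,
    map_add_right_eq_self]

lemma floor_shift {i : ℕ} {s : ℝ} (hs : s ∈ Ico (0 : ℝ) 1) : ⌊s + (i : ℝ)⌋₊ = i := by
  rw [Nat.floor_add_natCast hs.1, Nat.floor_eq_zero.2 hs.2, zero_add]

lemma Ici_eq : Ici (0 : ℝ) = ⋃ i : ℕ, Ico (i : ℝ) (i + 1) := by
  ext u
  simp only [mem_Ici, mem_iUnion, mem_Ico]
  constructor
  · intro hu
    exact ⟨⌊u⌋₊, Nat.floor_le hu, Nat.lt_floor_add_one u⟩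
  · rintro ⟨i, h1, _⟩
    exact le_trans (by positivity) h1

lemma disj : Pairwise (Function.onFun Disjoint fun i : ℕ => Ico (i : ℝ) (i + 1)) := by
  have key : ∀ i j : ℕ, i < j → Disjoint (Ico (i : ℝ) (i + 1)) (Ico (j : ℝ) (j + 1)) := by
    intro i j h
    refine Set.Ico_disjoint_Ico.2 ?_
    have : (i : ℝ) + 1 ≤ j := by exact_mod_cast h
    calc min ((i : ℝ) + 1) ((j : ℝ) + 1) ≤ (i : ℝ) + 1 := min_le_left _ _
      _ ≤ (j : ℝ) := this
      _ ≤ max (i : ℝ) (j : ℝ) := le_max_right _ _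
  intro i j hij
  rcases hij.lt_or_gt with h | h
  · exact key i j h
  · exact (key j i h).symm

lemma glue_lintegral (G : ℕ → ℝ → ℝ≥0∞) :
    ∫⁻ u in Ici (0 : ℝ), G ⌊u⌋₊ (u - (⌊u⌋₊ : ℝ)) =
      ∑' i : ℕ, ∫⁻ s in Ico (0 : ℝ) 1, G i s := by
  rw [Ici_eq, lintegral_iUnion (fun i => measurableSet_Ico) disj]
  refine tsum_congr fun i => ?_
  rw [← map_Ico i, (measurableEmbedding_addRight (i : ℝ)).lintegral_map]
  refine lintegral_congr_ae ?_
  filter_upwards [ae_restrict_mem measurableSet_Ico] with s hs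
  rw [floor_shift hs, add_sub_cancel_right]

lemma glue_ae {Q : ℕ → ℝ → Prop}
    (h : ∀ i, ∀ᵐ s ∂(volume.restrict (Icc (0 : ℝ) 1)), Q i s) :
    ∀ᵐ u ∂(volume.restrict (Ici (0 : ℝ))), Q ⌊u⌋₊ (u - (⌊u⌋₊ : ℝ)) := by
  rw [Ici_eq, ae_restrict_iUnion_iff]
  intro i
  rw [← map_Ico i, (measurableEmbedding_addRight (i : ℝ)).ae_map_iff]
  have h' : ∀ᵐ s ∂(volume.restrict (Ico (0 : ℝ) 1)), Q i s :=
    (h i).filter_mono (ae_mono (Measure.restrict_mono Ico_subset_Icc_self le_rfl))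
  filter_upwards [h', ae_restrict_mem measurableSet_Ico] with s hQ hs
  rw [floor_shift hs, add_sub_cancel_right]
  exact hQ

lemma glue_aemeasurable {g : ℕ → ℝ → ℝ}
    (h : ∀ i, AEMeasurable (g i) (volume.restrict (Icc (0 : ℝ) 1))) :
    AEMeasurable (fun u => g ⌊u⌋₊ (u - (⌊u⌋₊ : ℝ))) (volume.restrict (Ici (0 : ℝ))) := by
  rw [Ici_eq, aemeasurable_iUnion_iff]
  intro i
  rw [← map_Ico i, (measurableEmbedding_addRight (i : ℝ)).aemeasurable_map_iff]
  refine ((h i).mono_measure (Measure.restrict_mono Ico_subset_Icc_self le_rfl)).congr ?_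
  filter_upwards [ae_restrict_mem measurableSet_Ico] with s hs
  simp only [Function.comp_apply, floor_shift hs, add_sub_cancel_right]

lemma key_id (p : ℝ) (hp0 : 0 ≤ p) (ρ : ℕ → ℝ → ℝ)
    (hρ : AEMeasurable (rhoTilde ρ) (volume.restrict (Ici (0 : ℝ)))) (f : ℕ → ℝ → ℝ) :
    ∫⁻ u, ENNReal.ofReal (|Phi f u| ^ p) ∂(rayMeasure ρ) = pnorm ρ p f := by
  rw [rayMeasure, lintegral_withDensity_eq_lintegral_mul_non_measurable₀ _
    hρ.ennreal_ofReal (Filter.Eventually.of_forall fun u => ofReal_lt_top)]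
  have hcongr : ∀ u : ℝ,
      ((fun u => ENNReal.ofReal (rhoTilde ρ u)) * fun u => ENNReal.ofReal (|Phi f u| ^ p)) u =
        (fun (i : ℕ) (s : ℝ) => ENNReal.ofReal (ρ i s) * ENNReal.ofReal (|f i s| ^ p))
          ⌊u⌋₊ (u - (⌊u⌋₊ : ℝ)) := fun u => rfl
  rw [lintegral_congr hcongr]
  refine (glue_lintegral fun i s =>
    ENNReal.ofReal (ρ i s) * ENNReal.ofReal (|f i s| ^ p)).trans ?_
  refine tsum_congr fun i => ?_
  rw [← Measure.restrict_congr_set Ico_ae_eq_Icc]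
  refine lintegral_congr fun s => ?_
  rw [ENNReal.ofReal_mul (by positivity), mul_comm]

end RayAux

/-- **Remark 1.6 (rooted ray)**.  Let `1 ≤ p < ∞` and consider the rooted ray tree `I = ℕ`
with `M_n(i) = {i+n}`.  Let `ρ = (ρ_i)_{i ∈ ℕ}` be a weight and `ρ̃(u) = ρ_{⌊u⌋}(u - ⌊u⌋)`.
Then `Φ(f)(u) = f_{⌊u⌋}(u - ⌊u⌋)` is a surjective linear isometry from `L^p_ρ(L(G))` onto
`L^p([0,∞), ρ̃(u)du)`, and `Φ` intertwines the tree translation with the classical left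
translation on the half-line: `Φ(T_t f)(u) = Φ(f)(u + t)` for a.e. `u ≥ 0`. -/
theorem ray_tree_isometry_halfline (p : ℝ) (hp : 1 ≤ p) (ρ : ℕ → ℝ → ℝ)
    (hint : ∀ i, IntegrableOn (ρ i) (Set.Icc (0 : ℝ) 1))
    (hpos : ∀ i, ∀ᵐ s ∂(volume.restrict (Set.Icc (0 : ℝ) 1)), 0 < ρ i s) :
    (∀ (f g : ℕ → ℝ → ℝ) (a b : ℝ),
      Phi (fun i s => a * f i s + b * g i s) = fun u => a * Phi f u + b * Phi g u) ∧
    (∀ f, memLprho ρ p f →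
      MemLp (Phi f) (ENNReal.ofReal p) (rayMeasure ρ) ∧
      ∫⁻ u, ENNReal.ofReal (|Phi f u| ^ p) ∂(rayMeasure ρ) = pnorm ρ p f) ∧
    (∀ g : ℝ → ℝ, MemLp g (ENNReal.ofReal p) (rayMeasure ρ) →
      ∃ f, memLprho ρ p f ∧ Phi f =ᵐ[rayMeasure ρ] g) ∧
    (∀ f, memLprho ρ p f → ∀ t ≥ (0 : ℝ),
      ∀ᵐ u ∂(volume.restrict (Set.Ici (0 : ℝ))), Phi (TleftRay f t) u = Phi f (u + t)) := by
  have hp0 : (0 : ℝ) ≤ p := le_trans zero_le_one hp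
  have hne0 : ENNReal.ofReal p ≠ 0 := by
    simp only [ne_eq, ENNReal.ofReal_eq_zero, not_le]
    linarith
  have hnetop : ENNReal.ofReal p ≠ ⊤ := ENNReal.ofReal_ne_top
  have hρ : AEMeasurable (rhoTilde ρ) (volume.restrict (Set.Ici (0 : ℝ))) :=
    RayAux.glue_aemeasurable fun i => (hint i).aemeasurable
  have hpt : ∀ (h : ℝ → ℝ) (u : ℝ),
      (‖h u‖₊ : ℝ≥0∞) ^ p = ENNReal.ofReal (|h u| ^ p) := by
    intro h u
    rw [← enorm_eq_nnnorm, Real.enorm_eq_ofReal_abs, ENNReal.ofReal_rpow_of_nonneg (abs_nonneg _) hp0]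
  refine ⟨?_, ?_, ?_, ?_⟩
  · intro f g a b
    rfl
  · intro f hf
    have hkey := RayAux.key_id p hp0 ρ hρ f
    refine ⟨⟨?_, ?_⟩, hkey⟩
    · exact ((RayAux.glue_aemeasurable hf.1).mono_ac
        (withDensity_absolutelyContinuous _ _)).aestronglyMeasurable
    · rw [eLpNorm_eq_lintegral_rpow_enorm_toReal hne0 hnetop, ENNReal.toReal_ofReal hp0]
      have : ∫⁻ u, (‖Phi f u‖₊ : ℝ≥0∞) ^ p ∂(rayMeasure ρ) = pnorm ρ p f := by
        rw [← hkey]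
        exact lintegral_congr fun u => hpt (Phi f) u
      erw [this]
      exact ENNReal.rpow_lt_top_of_nonneg (by positivity) hf.2.ne
  · intro g hg
    have hposT : ∀ᵐ u ∂(volume.restrict (Set.Ici (0 : ℝ))),
        ENNReal.ofReal (rhoTilde ρ u) ≠ 0 := by
      filter_upwards [RayAux.glue_ae hpos] with u hu
      exact (ENNReal.ofReal_pos.2 hu).ne'
    have hac : volume.restrict (Set.Ici (0 : ℝ)) ≪ rayMeasure ρ :=
      withDensity_absolutelyContinuous' hρ.ennreal_ofReal hposT
    have hg2 : AEMeasurable g (volume.restrict (Set.Ici (0 : ℝ))) :=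
      (hg.1.aemeasurable).mono_ac hac
    refine ⟨fun i s => g (s + i), ⟨?_, ?_⟩, ?_⟩
    · intro i
      have hg3 : AEMeasurable g (volume.restrict (Set.Icc (i : ℝ) (i + 1))) :=
        hg2.mono_measure (Measure.restrict_mono
          (Set.Icc_subset_Ici_self.trans (Set.Ici_subset_Ici.mpr (Nat.cast_nonneg i))) le_rfl)
      rw [← RayAux.map_Icc i,
        (measurableEmbedding_addRight (i : ℝ)).aemeasurable_map_iff] at hg3
      exact hg3
    · have hPhi : Phi (fun i s => g (s + i)) = g := by
        funext u
        show g (u - (⌊u⌋₊ : ℝ) + (⌊u⌋₊ : ℝ)) = g u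
        rw [sub_add_cancel]
      have hkey := RayAux.key_id p hp0 ρ hρ (fun i s => g (s + i))
      rw [hPhi] at hkey
      rw [← hkey]
      have h2 := hg.2
      rw [eLpNorm_eq_lintegral_rpow_enorm_toReal hne0 hnetop, ENNReal.toReal_ofReal hp0] at h2
      have h3 : ∫⁻ u, (‖g u‖₊ : ℝ≥0∞) ^ p ∂(rayMeasure ρ) < ⊤ :=
        (ENNReal.rpow_lt_top_iff_of_pos (by positivity : (0 : ℝ) < 1 / p)).1 h2
      have : ∫⁻ u, ENNReal.ofReal (|g u| ^ p) ∂(rayMeasure ρ) =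
          ∫⁻ u, (‖g u‖₊ : ℝ≥0∞) ^ p ∂(rayMeasure ρ) :=
        lintegral_congr fun u => (hpt g u).symm
      rw [this]
      exact h3
    · have hPhi : Phi (fun i s => g (s + i)) = g := by
        funext u
        show g (u - (⌊u⌋₊ : ℝ) + (⌊u⌋₊ : ℝ)) = g u
        rw [sub_add_cancel]
      rw [hPhi]
  · intro f _ t ht
    filter_upwards [ae_restrict_mem measurableSet_Ici] with u hu
    have hu0 : (0 : ℝ) ≤ u := hu
    have hs0 : 0 ≤ u - (⌊u⌋₊ : ℝ) := sub_nonneg.2 (Nat.floor_le hu0)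
    have hfloor : ⌊u + t⌋₊ = ⌊u - (⌊u⌋₊ : ℝ) + t⌋₊ + ⌊u⌋₊ := by
      rw [show u + t = (u - (⌊u⌋₊ : ℝ) + t) + (⌊u⌋₊ : ℕ) by push_cast; ring,
        Nat.floor_add_natCast (by linarith)]
    show f (⌊u⌋₊ + nfl t (u - (⌊u⌋₊ : ℝ)))
        (t + (u - (⌊u⌋₊ : ℝ)) - (nfl t (u - (⌊u⌋₊ : ℝ)) : ℝ)) =
      f ⌊u + t⌋₊ (u + t - (⌊u + t⌋₊ : ℝ))
    rw [hfloor]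
    unfold nfl
    congr 1
    · ring
    · push_cast
      ring

end
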